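/- For α > 0 and constants C_T, μ_T ≥ 0, consider the kernel K_T(t,τ) = C_T·√α·exp(−πα(t−τ)² + μ_T|t−τ|)·exp(−(π/α)τ² + μ_T|τ|). Then sup_τ ∫_ℝ K_T(t,τ) dt and sup_t ∫_ℝ K_T(t,τ) dτ are both bounded by I(α) = C_T·√α·exp(μ_T²α/(4π))·∫_ℝ exp(−παξ² + μ_T|ξ|) dξ < ∞, and consequently for all f ∈ L²(ℝ), ∬_{ℝ×ℝ} |f(t)| K_T(t,τ) |f(τ)| dt dτ ≤ I(α)·‖f‖²_{L²(ℝ)} < ∞. -/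

import Mathlib

open MeasureTheory Real
open scoped ENNReal

private lemma gksb_quad (α μT : ℝ) (hα : 0 < α) (x : ℝ) :
    -(π / α * x ^ 2) + μT * |x| ≤ μT ^ 2 * α / (4 * π) := by
  have hπ : (0:ℝ) < π := Real.pi_pos
  rw [← sq_abs x, ← sub_nonneg]
  have h : μT ^ 2 * α / (4 * π) - (-(π / α * |x| ^ 2) + μT * |x|) =
      (2 * π * |x| - μT * α) ^ 2 / (4 * π * α) := by
    field_simp; ring_nf
  rw [h]; positivity

private lemma gksb_int (α μT : ℝ) (hα : 0 < α) :
    Integrable (fun ξ : ℝ => Real.exp (-(π * α * ξ ^ 2) + μT * |ξ|)) := by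
  have hπ : (0:ℝ) < π := Real.pi_pos
  have h1 : Integrable (fun ξ : ℝ =>
      Real.exp (μT ^ 2 / (2 * π * α)) * Real.exp (-(π * α / 2) * ξ ^ 2)) :=
    (integrable_exp_neg_mul_sq (by positivity)).const_mul _
  refine h1.mono' ((Real.continuous_exp.comp (by continuity)).aestronglyMeasurable) ?_
  filter_upwards with ξ
  rw [Real.norm_eq_abs, abs_of_pos (Real.exp_pos _), ← Real.exp_add]
  apply Real.exp_le_exp.mpr
  rw [← sq_abs ξ, ← sub_nonneg]
  have h : μT ^ 2 / (2 * π * α) + -(π * α / 2) * |ξ| ^ 2 - (-(π * α * |ξ| ^ 2) + μT * |ξ|) =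
      (π * α * |ξ| - μT) ^ 2 / (2 * π * α) := by
    field_simp; ring_nf
  rw [h]; positivity

theorem gaussian_kernel_schur_bounds (α CT μT : ℝ) (hα : 0 < α) (hCT : 0 ≤ CT)
    (hμT : 0 ≤ μT) :
    (∀ τ : ℝ, ∫⁻ t, ENNReal.ofReal
          (CT * Real.sqrt α * Real.exp (-(π * α * (t - τ) ^ 2) + μT * |t - τ|) *
            Real.exp (-(π / α * τ ^ 2) + μT * |τ|))
        ≤ ENNReal.ofReal (CT * Real.sqrt α * Real.exp (μT ^ 2 * α / (4 * π)) *
            ∫ ξ : ℝ, Real.exp (-(π * α * ξ ^ 2) + μT * |ξ|))) ∧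
    (∀ t : ℝ, ∫⁻ τ, ENNReal.ofReal
          (CT * Real.sqrt α * Real.exp (-(π * α * (t - τ) ^ 2) + μT * |t - τ|) *
            Real.exp (-(π / α * τ ^ 2) + μT * |τ|))
        ≤ ENNReal.ofReal (CT * Real.sqrt α * Real.exp (μT ^ 2 * α / (4 * π)) *
            ∫ ξ : ℝ, Real.exp (-(π * α * ξ ^ 2) + μT * |ξ|))) ∧
    Integrable (fun ξ : ℝ => Real.exp (-(π * α * ξ ^ 2) + μT * |ξ|)) ∧
    ∀ f : ℝ → ℂ, MemLp f 2 volume →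
      ∫⁻ p : ℝ × ℝ, ENNReal.ofReal
          (‖f p.1‖ * (CT * Real.sqrt α *
              Real.exp (-(π * α * (p.1 - p.2) ^ 2) + μT * |p.1 - p.2|) *
              Real.exp (-(π / α * p.2 ^ 2) + μT * |p.2|)) * ‖f p.2‖)
        ≤ ENNReal.ofReal (CT * Real.sqrt α * Real.exp (μT ^ 2 * α / (4 * π)) *
            ∫ ξ : ℝ, Real.exp (-(π * α * ξ ^ 2) + μT * |ξ|)) *
          (eLpNorm f 2 volume) ^ 2 := by
  have hπ : (0:ℝ) < π := Real.pi_pos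
  set E : ℝ → ℝ := fun ξ => Real.exp (-(π * α * ξ ^ 2) + μT * |ξ|) with hEdef
  set G : ℝ → ℝ := fun τ => Real.exp (-(π / α * τ ^ 2) + μT * |τ|) with hGdef
  set c : ℝ := CT * Real.sqrt α with hcdef
  set M : ℝ := μT ^ 2 * α / (4 * π) with hMdef
  have hc : 0 ≤ c := by positivity
  have hE : Integrable E := gksb_int α μT hα
  have hE0 : ∀ ξ, 0 ≤ E ξ := fun ξ => (Real.exp_pos _).le
  have hIE : 0 ≤ ∫ ξ, E ξ := integral_nonneg hE0
  have hGle : ∀ x : ℝ, G x ≤ Real.exp M := fun x =>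
    Real.exp_le_exp.mpr (gksb_quad α μT hα x)
  have hG0 : ∀ x, 0 ≤ G x := fun x => (Real.exp_pos _).le
  -- shifted lintegrals of E
  have hshiftR : ∀ τ : ℝ, (∫⁻ t, ENNReal.ofReal (E (t - τ))) = ENNReal.ofReal (∫ ξ, E ξ) := by
    intro τ
    rw [← ofReal_integral_eq_lintegral_ofReal (hE.comp_sub_right τ)
      (Filter.Eventually.of_forall fun t => hE0 _), integral_sub_right_eq_self E τ]
  have hshiftL : ∀ t : ℝ, (∫⁻ τ, ENNReal.ofReal (E (t - τ))) = ENNReal.ofReal (∫ ξ, E ξ) := by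
    intro t
    rw [← ofReal_integral_eq_lintegral_ofReal (hE.comp_sub_left t)
      (Filter.Eventually.of_forall fun τ => hE0 _), integral_sub_left_eq_self E volume t]
  -- marginal bound in t
  have hm1 : ∀ τ : ℝ, (∫⁻ t, ENNReal.ofReal (c * E (t - τ) * G τ))
      ≤ ENNReal.ofReal (c * Real.exp M * ∫ ξ, E ξ) := by
    intro τ
    calc ∫⁻ t, ENNReal.ofReal (c * E (t - τ) * G τ)
        = ∫⁻ t, ENNReal.ofReal (c * G τ) * ENNReal.ofReal (E (t - τ)) := by
          congr 1; funext t
          rw [← ENNReal.ofReal_mul (by positivity)]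
          ring_nf
      _ = ENNReal.ofReal (c * G τ) * ENNReal.ofReal (∫ ξ, E ξ) := by
          rw [lintegral_const_mul' _ _ ENNReal.ofReal_ne_top, hshiftR τ]
      _ ≤ ENNReal.ofReal (c * Real.exp M) * ENNReal.ofReal (∫ ξ, E ξ) := by
          gcongr
          exact hGle τ
      _ = ENNReal.ofReal (c * Real.exp M * ∫ ξ, E ξ) := by
          rw [← ENNReal.ofReal_mul (by positivity)]
  -- marginal bound in τ
  have hm2 : ∀ t : ℝ, (∫⁻ τ, ENNReal.ofReal (c * E (t - τ) * G τ))
      ≤ ENNReal.ofReal (c * Real.exp M * ∫ ξ, E ξ) := by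
    intro t
    calc ∫⁻ τ, ENNReal.ofReal (c * E (t - τ) * G τ)
        ≤ ∫⁻ τ, ENNReal.ofReal (c * Real.exp M) * ENNReal.ofReal (E (t - τ)) := by
          apply lintegral_mono
          intro τ
          dsimp only
          rw [← ENNReal.ofReal_mul (by positivity)]
          apply ENNReal.ofReal_le_ofReal
          calc c * E (t - τ) * G τ ≤ c * E (t - τ) * Real.exp M :=
                mul_le_mul_of_nonneg_left (hGle τ) (by positivity)
            _ = c * Real.exp M * E (t - τ) := by ring
      _ = ENNReal.ofReal (c * Real.exp M) * ENNReal.ofReal (∫ ξ, E ξ) := by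
          rw [lintegral_const_mul' _ _ ENNReal.ofReal_ne_top, hshiftL t]
      _ = ENNReal.ofReal (c * Real.exp M * ∫ ξ, E ξ) := by
          rw [← ENNReal.ofReal_mul (by positivity)]
  refine ⟨hm1, hm2, hE, ?_⟩
  -- Schur bound
  intro f hf
  set N : ℝ≥0∞ := ENNReal.ofReal (c * Real.exp M * ∫ ξ, E ξ) with hNdef
  set K : ℝ × ℝ → ℝ := fun p => c * E (p.1 - p.2) * G p.2 with hKdef
  have hKc : Continuous K := by
    have hsub : Continuous fun p : ℝ × ℝ => p.1 - p.2 := continuous_fst.sub continuous_snd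
    have h1 : Continuous fun p : ℝ × ℝ => Real.exp (-(π * α * (p.1 - p.2) ^ 2) + μT * |p.1 - p.2|) :=
      Real.continuous_exp.comp
        (((continuous_const.mul (hsub.pow 2)).neg).add (continuous_const.mul hsub.abs))
    have h2 : Continuous fun p : ℝ × ℝ => G p.2 :=
      Real.continuous_exp.comp
        (((continuous_const.mul (continuous_snd.pow 2)).neg).add
          (continuous_const.mul continuous_snd.abs))
    exact (continuous_const.mul h1).mul h2
  have hK0 : ∀ p, 0 ≤ K p := fun p => by positivity
  set g : ℝ → ℂ := hf.1.mk f with hgdef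
  have hg : StronglyMeasurable g := hf.1.stronglyMeasurable_mk
  have hfg : f =ᵐ[volume] g := hf.1.ae_eq_mk
  have hs : volume {x : ℝ | ¬ f x = g x} = 0 := ae_iff.mp hfg
  have h1 : (volume : Measure (ℝ × ℝ)) {p | ¬ f p.1 = g p.1} = 0 := by
    rw [Measure.volume_eq_prod]
    have he : {p : ℝ × ℝ | ¬ f p.1 = g p.1} = {x | ¬ f x = g x} ×ˢ Set.univ := by
      ext p; simp [Set.mem_prod]
    rw [he, Measure.prod_prod, hs, zero_mul]
  have h2 : (volume : Measure (ℝ × ℝ)) {p | ¬ f p.2 = g p.2} = 0 := by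
    rw [Measure.volume_eq_prod]
    have he : {p : ℝ × ℝ | ¬ f p.2 = g p.2} = Set.univ ×ˢ {x | ¬ f x = g x} := by
      ext p; simp [Set.mem_prod]
    rw [he, Measure.prod_prod, hs, mul_zero]
  have haep : ∀ᵐ p : ℝ × ℝ, f p.1 = g p.1 ∧ f p.2 = g p.2 :=
    (ae_iff.mpr h1).and (ae_iff.mpr h2)
  -- replace f by g in the double integral
  have hrepl : (∫⁻ p : ℝ × ℝ, ENNReal.ofReal (‖f p.1‖ * K p * ‖f p.2‖))
      = ∫⁻ p : ℝ × ℝ, ENNReal.ofReal (‖g p.1‖ * K p * ‖g p.2‖) := by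
    apply lintegral_congr_ae
    filter_upwards [haep] with p hp
    rw [hp.1, hp.2]
  -- measurable pieces
  have hKm : Measurable fun p : ℝ × ℝ => ENNReal.ofReal (K p) := hKc.measurable.ennreal_ofReal
  have hgn : Measurable fun x : ℝ => ‖g x‖ := hg.measurable.norm
  have hA_meas : Measurable fun p : ℝ × ℝ =>
      ENNReal.ofReal (‖g p.1‖ ^ 2 / 2) * ENNReal.ofReal (K p) :=
    (((hgn.comp measurable_fst).pow_const 2).div_const 2).ennreal_ofReal.mul hKm
  have hB_meas : Measurable fun p : ℝ × ℝ =>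
      ENNReal.ofReal (‖g p.2‖ ^ 2 / 2) * ENNReal.ofReal (K p) :=
    (((hgn.comp measurable_snd).pow_const 2).div_const 2).ennreal_ofReal.mul hKm
  -- AM-GM pointwise
  have hptwise : ∀ p : ℝ × ℝ, ENNReal.ofReal (‖g p.1‖ * K p * ‖g p.2‖)
      ≤ ENNReal.ofReal (‖g p.1‖ ^ 2 / 2) * ENNReal.ofReal (K p)
        + ENNReal.ofReal (‖g p.2‖ ^ 2 / 2) * ENNReal.ofReal (K p) := by
    intro p
    rw [← ENNReal.ofReal_mul (by positivity), ← ENNReal.ofReal_mul (by positivity),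
      ← ENNReal.ofReal_add (by positivity) (by positivity)]
    apply ENNReal.ofReal_le_ofReal
    nlinarith [sq_nonneg (‖g p.1‖ - ‖g p.2‖), hK0 p, norm_nonneg (g p.1), norm_nonneg (g p.2),
      mul_nonneg (mul_nonneg (sq_nonneg (‖g p.1‖ - ‖g p.2‖)) (hK0 p)) (hK0 p)]
  -- half-norm lintegral
  set S : ℝ≥0∞ := ∫⁻ x, ENNReal.ofReal (‖g x‖ ^ 2) with hSdef
  have hhalf : (∫⁻ x, ENNReal.ofReal (‖g x‖ ^ 2 / 2)) = ENNReal.ofReal (1/2) * S := by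
    rw [hSdef, ← lintegral_const_mul' _ _ ENNReal.ofReal_ne_top]
    congr 1; funext x
    rw [← ENNReal.ofReal_mul (by norm_num)]
    congr 1; ring
  -- bound term A
  have hA : (∫⁻ p : ℝ × ℝ, ENNReal.ofReal (‖g p.1‖ ^ 2 / 2) * ENNReal.ofReal (K p))
      ≤ ENNReal.ofReal (1/2) * S * N := by
    rw [Measure.volume_eq_prod, lintegral_prod _ hA_meas.aemeasurable]
    calc ∫⁻ t, ∫⁻ τ, ENNReal.ofReal (‖g t‖ ^ 2 / 2) * ENNReal.ofReal (K (t, τ))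
        = ∫⁻ t, ENNReal.ofReal (‖g t‖ ^ 2 / 2) * ∫⁻ τ, ENNReal.ofReal (K (t, τ)) := by
          congr 1; funext t
          rw [lintegral_const_mul' _ _ ENNReal.ofReal_ne_top]
      _ ≤ ∫⁻ t, ENNReal.ofReal (‖g t‖ ^ 2 / 2) * N := by
          apply lintegral_mono
          intro t
          exact mul_le_mul_right (hm2 t) _
      _ = (∫⁻ t, ENNReal.ofReal (‖g t‖ ^ 2 / 2)) * N := lintegral_mul_const' _ _ (by simp [hNdef])
      _ = ENNReal.ofReal (1/2) * S * N := by rw [hhalf]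
  -- bound term B
  have hB : (∫⁻ p : ℝ × ℝ, ENNReal.ofReal (‖g p.2‖ ^ 2 / 2) * ENNReal.ofReal (K p))
      ≤ ENNReal.ofReal (1/2) * S * N := by
    rw [Measure.volume_eq_prod, lintegral_prod_symm _ hB_meas.aemeasurable]
    calc ∫⁻ τ, ∫⁻ t, ENNReal.ofReal (‖g τ‖ ^ 2 / 2) * ENNReal.ofReal (K (t, τ))
        = ∫⁻ τ, ENNReal.ofReal (‖g τ‖ ^ 2 / 2) * ∫⁻ t, ENNReal.ofReal (K (t, τ)) := by
          congr 1; funext τ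
          rw [lintegral_const_mul' _ _ ENNReal.ofReal_ne_top]
      _ ≤ ∫⁻ τ, ENNReal.ofReal (‖g τ‖ ^ 2 / 2) * N := by
          apply lintegral_mono
          intro τ
          exact mul_le_mul_right (hm1 τ) _
      _ = (∫⁻ τ, ENNReal.ofReal (‖g τ‖ ^ 2 / 2)) * N := lintegral_mul_const' _ _ (by simp [hNdef])
      _ = ENNReal.ofReal (1/2) * S * N := by rw [hhalf]
  -- identify S with the squared L² norm
  have hS : S = (eLpNorm f 2 volume) ^ 2 := by
    have h2 : eLpNorm f 2 volume = eLpNorm g 2 volume := eLpNorm_congr_ae hfg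
    rw [h2, eLpNorm_eq_lintegral_rpow_enorm_toReal (p := 2) (by norm_num) (by norm_num)]
    rw [← ENNReal.rpow_natCast _ 2, ← ENNReal.rpow_mul]
    norm_num
    rw [hSdef]
    apply lintegral_congr
    intro x
    rw [ENNReal.ofReal_pow (norm_nonneg _), ofReal_norm_eq_enorm]
  -- put everything together
  calc ∫⁻ p : ℝ × ℝ, ENNReal.ofReal (‖f p.1‖ * K p * ‖f p.2‖)
      = ∫⁻ p : ℝ × ℝ, ENNReal.ofReal (‖g p.1‖ * K p * ‖g p.2‖) := hrepl
    _ ≤ ∫⁻ p : ℝ × ℝ, (ENNReal.ofReal (‖g p.1‖ ^ 2 / 2) * ENNReal.ofReal (K p)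
          + ENNReal.ofReal (‖g p.2‖ ^ 2 / 2) * ENNReal.ofReal (K p)) :=
        lintegral_mono hptwise
    _ = (∫⁻ p : ℝ × ℝ, ENNReal.ofReal (‖g p.1‖ ^ 2 / 2) * ENNReal.ofReal (K p))
          + ∫⁻ p : ℝ × ℝ, ENNReal.ofReal (‖g p.2‖ ^ 2 / 2) * ENNReal.ofReal (K p) :=
        lintegral_add_left hA_meas _
    _ ≤ ENNReal.ofReal (1/2) * S * N + ENNReal.ofReal (1/2) * S * N := add_le_add hA hB
    _ = N * S := by
        have h12 : (2:ℝ≥0∞) * ENNReal.ofReal (1/2) = 1 := by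
          have he : ENNReal.ofReal (1/2 : ℝ) = 2⁻¹ := by
            rw [one_div, ENNReal.ofReal_inv_of_pos two_pos, ENNReal.ofReal_ofNat]
          rw [he]
          exact ENNReal.mul_inv_cancel two_ne_zero ENNReal.ofNat_ne_top
        rw [← two_mul,
          show ((2:ℝ≥0∞) * (ENNReal.ofReal (1/2) * S * N)) = (2 * ENNReal.ofReal (1/2)) * (N * S) by
            ring,
          h12, one_mul]
    _ = N * (eLpNorm f 2 volume) ^ 2 := by rw [hS]
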